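/- arXiv:2004.00838 — 2 statements merged into one kernel-verified Lean document; each statement's English description precedes it below -/
import Mathlib

section
/- The Boolean average commutes with the cyclic shift: Bav(Btr(v)) = Btr(Bav(v)) for every v ∈ B_N = F_2^N, where Btr(v_0, v_1, …, v_{N−1}) = (v_{N−1}, v_0, …, v_{N−2}). -/
namespace Rhythm

/-- `a +_N b`, addition on `Z_N = {0,…,N−1}`. -/
def addN (N a b : ℕ) : ℕ := (a + b) % N

/-- `a −_N b`, subtraction on `Z_N = {0,…,N−1}`. -/
def subN (N a b : ℕ) : ℕ := (a + N - b) % N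

/-- The discrete average `av(a,b) = a +_N ⌊(b −_N a)/2⌋`. -/
def av (N a b : ℕ) : ℕ := addN N a (subN N b a / 2)

/-- The cyclic interval `[a,b]_{Z_N}`. -/
def cyclicIcc (N a b : ℕ) : Finset ℕ :=
  if a ≤ b then Finset.Icc a b else Finset.Icc a (N - 1) ∪ Finset.Icc 0 b

/-- The half-open cyclic interval `[a,b)_{Z_N} = [a,b]_{Z_N} \ {b}`. -/
def cyclicIco (N a b : ℕ) : Finset ℕ := (cyclicIcc N a b).erase b

/-- The half-open cyclic interval `(a,b]_{Z_N} = [a,b]_{Z_N} \ {a}`. -/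
def cyclicIoc (N a b : ℕ) : Finset ℕ := (cyclicIcc N a b).erase a

/-- Cyclic successor `⟨i+1⟩_n` on `Fin n`. -/
def csucc {n : ℕ} (i : Fin n) : Fin n := ⟨(i.val + 1) % n, Nat.mod_lt _ i.pos⟩

/-- Cyclic predecessor `⟨i−1⟩_n` on `Fin n`. -/
def cpred {n : ℕ} (i : Fin n) : Fin n := ⟨(i.val + (n - 1)) % n, Nat.mod_lt _ i.pos⟩

/-- `a ∈ R_N^n`: entries in `Z_N`, pairwise distinct, and `Σ_i (a_{⟨i+1⟩_n} −_N a_i) = N`. -/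
def IsRhythm (N : ℕ) {n : ℕ} (a : Fin n → ℕ) : Prop :=
  (∀ i, a i < N) ∧ Function.Injective a ∧ (∑ i, subN N (a (csucc i)) (a i)) = N

/-- The discrete average transformation `Rav`. -/
def Rav (N : ℕ) {n : ℕ} (a : Fin n → ℕ) : Fin n → ℕ := fun i => av N (a i) (a (csucc i))

/-- The rotation `rot(a_0,…,a_{n−1}) = (a_{n−1},a_0,…,a_{n−2})`. -/
def rot {n : ℕ} (a : Fin n → ℕ) : Fin n → ℕ := fun i => a (cpred i)

/-- The translation `tr(a_0,…,a_{n−1}) = (a_0 +_N 1,…,a_{n−1} +_N 1)`. -/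
def tr (N : ℕ) {n : ℕ} (a : Fin n → ℕ) : Fin n → ℕ := fun i => addN N (a i) 1

/-- `j` is the jumping number of `a`: `a_{⟨j−1⟩_n} > a_j` and `a_{⟨k−1⟩_n} < a_k` for `k ≠ j`. -/
def IsJump {n : ℕ} (a : Fin n → ℕ) (j : Fin n) : Prop :=
  a (cpred j) > a j ∧ ∀ k, k ≠ j → a (cpred k) < a k

/-- The map `Iav`: for `n ≥ 2` it is `Rav` if `a` is proper (`N − a_{n−1} > a_0`) and
`rot ∘ Rav` otherwise; for `n ≤ 1` it is the identity. -/
def Iav (N : ℕ) {n : ℕ} (a : Fin n → ℕ) : Fin n → ℕ :=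
  if h : 2 ≤ n then
    if N - a ⟨n - 1, by omega⟩ > a ⟨0, by omega⟩ then Rav N a else rot (Rav N a)
  else a

/-- The support of a Boolean vector `v ∈ F_2^N`. -/
def supp (N : ℕ) (v : Fin N → ZMod 2) : Finset (Fin N) :=
  Finset.univ.filter fun i => v i = 1

/-- `BtoI(v)`: the increasing enumeration of the support of `v`. -/
def BtoI (N : ℕ) (v : Fin N → ZMod 2) : Fin (supp N v).card → ℕ :=
  fun i => (((supp N v).orderIsoOfFin rfl) i).1.val

/-- `ItoB(b)`: the characteristic vector of the set of entries of the tuple `b`. -/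
def ItoB (N : ℕ) {n : ℕ} (b : Fin n → ℕ) : Fin N → ZMod 2 :=
  fun i => if ∃ k, b k = i.val then 1 else 0

/-- The Boolean average `Bav = ItoB ∘ Iav ∘ BtoI : B_N → B_N`. -/
def Bav (N : ℕ) (v : Fin N → ZMod 2) : Fin N → ZMod 2 :=
  ItoB N (Iav N (BtoI N v))

/-- The cyclic shift `Btr(v_0,…,v_{N−1}) = (v_{N−1},v_0,…,v_{N−2})`. -/
def Btr (N : ℕ) (v : Fin N → ZMod 2) : Fin N → ZMod 2 := fun i => v (cpred i)

/-- `Par_N`: the set of parental pairs of zero, i.e. pairs `(a,b) ∈ Z_N × Z_N` with `av(a,b) = 0`. -/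
def Par (N : ℕ) : Finset (ℕ × ℕ) :=
  (Finset.range N ×ˢ Finset.range N).filter fun p => av N p.1 p.2 = 0

/-- The least absolute remainder `φ_N(i) ∈ Z_{N,±}` of `i ∈ Z_N`. -/
def toSigned (N : ℕ) (i : Fin N) : ℤ :=
  if (i : ℕ) ≤ N / 2 then (i : ℤ) else (i : ℤ) - N

/-- `G_N(y) = Bav_N^0(v)` where `v_{⟨j⟩_N} = 1 + y_j` for `j ∈ Z_{N,±}`. -/
def G (N : ℕ) (y : ℤ → ZMod 2) : ZMod 2 :=
  if h : 0 < N then Bav N (fun i => 1 + y (toSigned N i)) ⟨0, h⟩ else 0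

end Rhythm

section Helpers
open Rhythm

variable {N n : ℕ}

lemma mod_key (hN : 0 < N) {x : ℕ} (hx : x < 2 * N) :
    x % N = if x < N then x else x - N := by
  split_ifs with h
  · exact Nat.mod_eq_of_lt h
  · rw [Nat.mod_eq_sub_mod (by omega), Nat.mod_eq_of_lt (by omega)]

lemma cpred_csucc (i : Fin n) : cpred (csucc i) = i := by
  have h := i.pos
  ext
  simp only [cpred, csucc, Nat.mod_add_mod]
  have : i.val + 1 + (n - 1) = i.val + n := by omega
  rw [this, Nat.add_mod_right, Nat.mod_eq_of_lt i.isLt]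

lemma csucc_cpred (i : Fin n) : csucc (cpred i) = i := by
  have h := i.pos
  ext
  simp only [cpred, csucc, Nat.mod_add_mod]
  have : i.val + (n - 1) + 1 = i.val + n := by omega
  rw [this, Nat.add_mod_right, Nat.mod_eq_of_lt i.isLt]

lemma csucc_injective : Function.Injective (csucc (n := n)) := by
  intro i j h
  rw [← cpred_csucc i, h, cpred_csucc]

lemma subN_lt (hN : 0 < N) (a b : ℕ) : subN N a b < N := Nat.mod_lt _ hN

lemma Rav_lt (hN : 0 < N) (a : Fin n → ℕ) (i : Fin n) : Rav N a i < N :=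
  Nat.mod_lt _ hN

lemma subN_succ (hN : 0 < N) {a b : ℕ} (ha : a < N) (hb : b < N) :
    subN N ((a + 1) % N) ((b + 1) % N) = subN N a b := by
  unfold subN
  rw [mod_key hN (x := a + 1) (by omega), mod_key hN (x := b + 1) (by omega)]
  split_ifs with h1 h2 h2
  · rw [mod_key hN (by omega), mod_key hN (by omega)]
    split_ifs <;> omega
  · rw [mod_key hN (by omega), mod_key hN (by omega)]
    split_ifs <;> omega
  · rw [mod_key hN (by omega), mod_key hN (by omega)]
    split_ifs <;> omega
  · rw [mod_key hN (by omega), mod_key hN (by omega)]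
    split_ifs <;> omega

lemma Rav_tr (hN : 0 < N) (a : Fin n → ℕ) (ha : ∀ i, a i < N) :
    Rav N (tr N a) = tr N (Rav N a) := by
  funext i
  simp only [Rav, tr, av, addN, subN_succ hN (ha _) (ha _), Nat.mod_add_mod, Nat.add_mod_right]
  congr 1
  omega

lemma Rav_rot (a : Fin n → ℕ) : Rav N (rot a) = rot (Rav N a) := by
  funext i
  simp only [Rav, rot, cpred_csucc, csucc_cpred]

lemma Rav_comp_cast {m : ℕ} (h : m = n) (a : Fin n → ℕ) :
    Rav N (a ∘ Fin.cast h) = Rav N a ∘ Fin.cast h := by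
  subst h; rfl

lemma range_rot (a : Fin n → ℕ) : Set.range (rot a) = Set.range a := by
  have hsurj : Function.Surjective (cpred (n := n)) := fun i => ⟨csucc i, cpred_csucc i⟩
  exact hsurj.range_comp a

lemma range_Iav (h : 2 ≤ n) (a : Fin n → ℕ) :
    Set.range (Iav N a) = Set.range (Rav N a) := by
  unfold Iav
  rw [dif_pos h]
  split_ifs
  · rfl
  · exact range_rot _

lemma ItoB_congr {m : ℕ} {b : Fin n → ℕ} {c : Fin m → ℕ}
    (h : Set.range b = Set.range c) : ItoB N b = ItoB N c := by
  funext i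
  have : (∃ k, b k = i.val) ↔ (∃ k, c k = i.val) := by
    constructor
    · rintro ⟨k, hk⟩
      have : (i.val : ℕ) ∈ Set.range c := h ▸ ⟨k, hk⟩
      exact this
    · rintro ⟨k, hk⟩
      have : (i.val : ℕ) ∈ Set.range b := h.symm ▸ ⟨k, hk⟩
      exact this
  simp only [ItoB, this]

lemma ItoB_tr (hN : 0 < N) {b : Fin n → ℕ} (hb : ∀ k, b k < N) :
    ItoB N (tr N b) = Btr N (ItoB N b) := by
  funext i
  simp only [ItoB, Btr, tr, addN, cpred]
  have key : ∀ k, (b k + 1) % N = i.val ↔ b k = (i.val + (N - 1)) % N := by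
    intro k
    have hbk := hb k
    have hi := i.isLt
    rw [mod_key hN (x := b k + 1) (by omega), mod_key hN (x := i.val + (N - 1)) (by omega)]
    split_ifs <;> omega
  simp only [key]
  exact if_congr Iff.rfl rfl rfl

lemma mem_supp_iff {v : Fin N → ZMod 2} {i : Fin N} : i ∈ supp N v ↔ v i = 1 := by
  simp [supp]

lemma zmod2_cases (x : ZMod 2) : x = 0 ∨ x = 1 := by revert x; decide

lemma BtoI_eq (v : Fin N → ZMod 2) (i : Fin (supp N v).card) :
    BtoI N v i = (((supp N v).orderEmbOfFin rfl) i).val := rfl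

lemma ItoB_BtoI (v : Fin N → ZMod 2) : ItoB N (BtoI N v) = v := by
  funext i
  simp only [ItoB, BtoI]
  have : (∃ k, (((supp N v).orderIsoOfFin rfl) k).val.val = i.val) ↔ v i = 1 := by
    constructor
    · rintro ⟨k, hk⟩
      have hmem := (((supp N v).orderIsoOfFin rfl) k).2
      have : (((supp N v).orderIsoOfFin rfl) k).val = i := Fin.ext hk
      rw [this] at hmem
      exact mem_supp_iff.mp hmem
    · intro hv
      obtain ⟨k, hk⟩ := ((supp N v).orderIsoOfFin rfl).surjective ⟨i, mem_supp_iff.mpr hv⟩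
      exact ⟨k, by rw [hk]⟩
  split_ifs with h
  · exact (if_pos h).trans (this.mp h).symm
  · rcases zmod2_cases (v i) with h0 | h1
    · exact (if_neg h).trans h0.symm
    · exact absurd (this.mpr h1) h

end Helpers

section MainHelpers
open Rhythm

lemma cpred_val {m : ℕ} (i : Fin m) :
    (cpred i).val = if i.val = 0 then m - 1 else i.val - 1 := by
  have hm := i.pos
  have hi := i.isLt
  simp only [cpred]
  rw [mod_key hm (by omega)]
  split_ifs <;> omega

end MainHelpers


open Rhythm in
/-- The Boolean average commutes with the cyclic shift: `Bav(Btr(v)) = Btr(Bav(v))` for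
every `v ∈ B_N = F_2^N`. -/
theorem Bav_comm_Btr (N : ℕ) (hN : 3 ≤ N) (v : Fin N → ZMod 2) :
    Bav N (Btr N v) = Btr N (Bav N v) := by
  have hN0 : 0 < N := by omega
  have hsupp : supp N (Btr N v) = (supp N v).image csucc := by
    ext i
    simp only [mem_supp_iff, Finset.mem_image, Btr]
    constructor
    · intro h
      exact ⟨cpred i, h, csucc_cpred i⟩
    · rintro ⟨j, hj, rfl⟩
      rw [cpred_csucc]
      exact hj
  have hcard : (supp N (Btr N v)).card = (supp N v).card := by
    rw [hsupp, Finset.card_image_of_injective _ csucc_injective]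
  by_cases h2 : 2 ≤ (supp N v).card
  · -- main case
    have h2' : 2 ≤ (supp N (Btr N v)).card := by omega
    set a : Fin (supp N v).card → ℕ := BtoI N v with ha_def
    have e := (supp N v).orderEmbOfFin rfl
    have ha_lt : ∀ i, a i < N := fun i => (((supp N v).orderEmbOfFin rfl) i).isLt
    have ha_mono : StrictMono a := by
      intro i j hij
      exact ((supp N v).orderEmbOfFin rfl).strictMono hij
    have hcastsurj : Function.Surjective (Fin.cast hcard) := fun j =>
      ⟨Fin.cast hcard.symm j, by ext; rfl⟩
    have hrange : Set.range (Iav N (BtoI N (Btr N v))) = Set.range (tr N (Rav N a)) := by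
      by_cases hlast : ∃ i : Fin (supp N v).card, a i = N - 1
      · -- case 2 : N-1 in support
        have hn2 : 2 ≤ (supp N v).card := h2
        have hlast' : a ⟨(supp N v).card - 1, by omega⟩ = N - 1 := by
          obtain ⟨i0, hi0⟩ := hlast
          have hle : (⟨(supp N v).card - 1, by omega⟩ : Fin (supp N v).card) ≤ i0 := by
            by_contra hle
            push_neg at hle
            have := ha_mono hle
            have := ha_lt ⟨(supp N v).card - 1, by omega⟩
            omega
          have : i0 = ⟨(supp N v).card - 1, by omega⟩ := by
            apply Fin.ext
            have := i0.isLt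
            have := Fin.le_def.mp hle
            simp only at this ⊢
            omega
          rw [← this]
          exact hi0
        have hsmall : ∀ i : Fin (supp N v).card, i.val < (supp N v).card - 1 → a i < N - 1 := by
          intro i hi
          have := ha_mono (show i < ⟨(supp N v).card - 1, by omega⟩ from hi)
          omega
        set f : Fin (supp N (Btr N v)).card → Fin N :=
          fun i => csucc (((supp N v).orderEmbOfFin rfl) (cpred (Fin.cast hcard i))) with hf_def
        have hfmem : ∀ i, f i ∈ supp N (Btr N v) := by
          intro i
          rw [hsupp]
          exact Finset.mem_image_of_mem _ (Finset.orderEmbOfFin_mem _ _ _)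
        have hval : ∀ x : Fin (supp N (Btr N v)).card,
            (f x).val = (a (cpred (Fin.cast hcard x)) + 1) % N := fun x => rfl
        have hcpv : ∀ x : Fin (supp N (Btr N v)).card,
            (cpred (Fin.cast hcard x)).val
              = if x.val = 0 then (supp N v).card - 1 else x.val - 1 := by
          intro x
          rw [cpred_val]
          rfl
        have hfmono : StrictMono f := by
          intro i j hij
          rw [Fin.lt_def, hval, hval]
          have hij' := Fin.lt_def.mp hij
          have hjlt : j.val < (supp N v).card := by have := j.isLt; omega
          rcases Nat.eq_zero_or_pos i.val with hi0 | hipos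
          · have hpi : cpred (Fin.cast hcard i) = ⟨(supp N v).card - 1, by omega⟩ := by
              apply Fin.ext
              rw [hcpv i, if_pos hi0]
            have hpjv : (cpred (Fin.cast hcard j)).val = j.val - 1 := by
              rw [hcpv j, if_neg (by omega)]
            have hpj : a (cpred (Fin.cast hcard j)) < N - 1 := by
              apply hsmall
              omega
            rw [hpi, hlast']
            have h1 : (N - 1 + 1) % N = 0 := by
              have : N - 1 + 1 = N := by omega
              rw [this, Nat.mod_self]
            rw [h1, Nat.mod_eq_of_lt (by omega)]
            omega
          · have hpiv : (cpred (Fin.cast hcard i)).val = i.val - 1 := by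
              rw [hcpv i, if_neg (by omega)]
            have hpjv : (cpred (Fin.cast hcard j)).val = j.val - 1 := by
              rw [hcpv j, if_neg (by omega)]
            have hmlt : cpred (Fin.cast hcard i) < cpred (Fin.cast hcard j) := by
              rw [Fin.lt_def, hpiv, hpjv]; omega
            have hlt := ha_mono hmlt
            have hpj : a (cpred (Fin.cast hcard j)) < N - 1 := by
              apply hsmall
              rw [hpjv]; omega
            rw [Nat.mod_eq_of_lt (by omega), Nat.mod_eq_of_lt (by omega)]
            omega
        have hfeq := Finset.orderEmbOfFin_unique (rfl :
          (supp N (Btr N v)).card = (supp N (Btr N v)).card) hfmem hfmono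
        have hb : BtoI N (Btr N v) = rot (tr N a) ∘ Fin.cast hcard := by
          funext i
          rw [BtoI_eq, ← congrFun hfeq i]
          rfl
        calc Set.range (Iav N (BtoI N (Btr N v)))
            = Set.range (Rav N (BtoI N (Btr N v))) := range_Iav h2' _
          _ = Set.range (Rav N (rot (tr N a)) ∘ Fin.cast hcard) := by
              rw [hb, Rav_comp_cast]
          _ = Set.range (Rav N (rot (tr N a))) := hcastsurj.range_comp _
          _ = Set.range (rot (Rav N (tr N a))) := by rw [Rav_rot]
          _ = Set.range (Rav N (tr N a)) := range_rot _
          _ = Set.range (tr N (Rav N a)) := by rw [Rav_tr hN0 a ha_lt]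
      · -- case 1 : N-1 not in support
        push_neg at hlast
        have ha1 : ∀ i, a i + 1 < N := by
          intro i
          have h1 := ha_lt i
          have h2 := hlast i
          omega
        set f : Fin (supp N (Btr N v)).card → Fin N :=
          fun i => csucc (((supp N v).orderEmbOfFin rfl) (Fin.cast hcard i)) with hf_def
        have hfmem : ∀ i, f i ∈ supp N (Btr N v) := by
          intro i
          rw [hsupp]
          exact Finset.mem_image_of_mem _ (Finset.orderEmbOfFin_mem _ _ _)
        have hval : ∀ x : Fin (supp N (Btr N v)).card,
            (f x).val = (a (Fin.cast hcard x) + 1) % N := fun x => rfl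
        have hfmono : StrictMono f := by
          intro i j hij
          rw [Fin.lt_def, hval, hval,
            Nat.mod_eq_of_lt (ha1 _), Nat.mod_eq_of_lt (ha1 _)]
          have : Fin.cast hcard i < Fin.cast hcard j := hij
          have := ha_mono this
          omega
        have hfeq := Finset.orderEmbOfFin_unique (rfl :
          (supp N (Btr N v)).card = (supp N (Btr N v)).card) hfmem hfmono
        have hb : BtoI N (Btr N v) = tr N a ∘ Fin.cast hcard := by
          funext i
          rw [BtoI_eq, ← congrFun hfeq i]
          rfl
        calc Set.range (Iav N (BtoI N (Btr N v)))
            = Set.range (Rav N (BtoI N (Btr N v))) := range_Iav h2' _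
          _ = Set.range (Rav N (tr N a) ∘ Fin.cast hcard) := by
              rw [hb, Rav_comp_cast]
          _ = Set.range (Rav N (tr N a)) := hcastsurj.range_comp _
          _ = Set.range (tr N (Rav N a)) := by rw [Rav_tr hN0 a ha_lt]
    calc Bav N (Btr N v)
        = ItoB N (Iav N (BtoI N (Btr N v))) := rfl
      _ = ItoB N (tr N (Rav N a)) := ItoB_congr hrange
      _ = Btr N (ItoB N (Rav N a)) := ItoB_tr hN0 (Rav_lt hN0 a)
      _ = Btr N (ItoB N (Iav N a)) := by rw [ItoB_congr (range_Iav h2 a)]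
      _ = Btr N (Bav N v) := rfl
  · -- degenerate case
    have h2' : ¬ 2 ≤ (supp N (Btr N v)).card := by omega
    have hBv : Bav N v = v := by
      show ItoB N (Iav N (BtoI N v)) = v
      unfold Iav
      rw [dif_neg h2]
      exact ItoB_BtoI v
    have hBw : Bav N (Btr N v) = Btr N v := by
      show ItoB N (Iav N (BtoI N (Btr N v))) = Btr N v
      unfold Iav
      rw [dif_neg h2']
      exact ItoB_BtoI (Btr N v)
    rw [hBv, hBw]
end

section
/- Let m ≥ 2. Then the following recurrences hold. (Even case, N = 2m:) for every y : Z_{2m,±} → F_2, letting y' denote the restriction of y to Z_{2m−1,±} = {−m+1, …, m−1}, one has G_{2m}(y) = G_{2m−1}(y') + (∏_{k=−m+2}^{−1} y_k) · (∏_{k=1}^{m−1} y_k) · (y_m + 1) · (y_0 + y_{−m+1}) in F_2. (Odd case, N = 2m+1:) for every y : Z_{2m+1,±} → F_2, letting y' denote the restriction of y to Z_{2m,±} = {−m+1, …, m}, one has G_{2m+1}(y) = G_{2m}(y') + (∏_{k=−m+1}^{−1} y_k) · (∏_{k=1}^{m−1} y_k) · (y_{−m} + 1) · (y_0 + y_m)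 in F_2. -/
namespace RhythmAux
open Rhythm

/-! ### ZMod 2 helpers -/

lemma z2 (a : ZMod 2) : a = 0 ∨ a = 1 := by revert a; decide
lemma z2_add_one_eq_one {a : ZMod 2} : 1 + a = 1 ↔ a = 0 := by revert a; decide
lemma z2_add_one_eq_zero {a : ZMod 2} : 1 + a = 0 ↔ a = 1 := by revert a; decide
lemma z2_mul_eq_one {a b : ZMod 2} : a * b = 1 ↔ a = 1 ∧ b = 1 := by revert a b; decide

lemma z2_prod_eq_one {ι : Type*} (s : Finset ι) (f : ι → ZMod 2) :
    (∏ k ∈ s, f k) = 1 ↔ ∀ k ∈ s, f k = 1 := by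
  classical
  constructor
  · intro h k hk
    rcases z2 (f k) with h0 | h1
    · exfalso
      have : (∏ k ∈ s, f k) = 0 := Finset.prod_eq_zero hk h0
      rw [this] at h; exact absurd h (by decide)
    · exact h1
  · intro h; exact Finset.prod_eq_one h

lemma z2_prod_cases {ι : Type*} (s : Finset ι) (f : ι → ZMod 2) :
    (∏ k ∈ s, f k) = 0 ∨ (∏ k ∈ s, f k) = 1 := z2 _

/-! ### arithmetic of `av` -/

lemma subN_lt {N : ℕ} (hN : 0 < N) (a b : ℕ) : subN N a b < N := Nat.mod_lt _ hN

lemma subN_eq_of_le {N a b : ℕ} (hab : a ≤ b) (hb : b < N) : subN N b a = b - a := by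
  unfold subN
  have h1 : b + N - a = (b - a) + N := by omega
  rw [h1, Nat.add_mod_right, Nat.mod_eq_of_lt (by omega)]

lemma subN_eq_of_lt {N a b : ℕ} (hba : b < a) (ha : a < N) : subN N b a = b + N - a := by
  unfold subN
  exact Nat.mod_eq_of_lt (by omega)

def pD (N d : ℕ) : ℕ := (N - d / 2) % N
def qD (d : ℕ) : ℕ := (d + 1) / 2

lemma pD_lt {N : ℕ} (hN : 0 < N) (d : ℕ) : pD N d < N := Nat.mod_lt _ hN
lemma qD_lt {N d : ℕ} (hd : d < N) : qD d < N := by unfold qD; omega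

lemma pD_spec {N d : ℕ} (hN : 0 < N) (hd : d < N) :
    (d / 2 = 0 ∧ pD N d = 0) ∨ (0 < d / 2 ∧ pD N d = N - d / 2) := by
  rcases Nat.eq_zero_or_pos (d / 2) with h | h
  · left; refine ⟨h, ?_⟩; unfold pD; rw [h, Nat.sub_zero, Nat.mod_self]
  · right; refine ⟨h, ?_⟩; unfold pD
    exact Nat.mod_eq_of_lt (by omega)

lemma subN_qD_pD {N d : ℕ} (hN : 0 < N) (hd : d < N) : subN N (qD d) (pD N d) = d := by
  rcases pD_spec hN hd with ⟨h2, hp⟩ | ⟨h2, hp⟩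
  · have hq : qD d = d := by unfold qD; omega
    rw [hp, hq, subN_eq_of_le (by omega) hd]; omega
  · have hqp : qD d < pD N d := by unfold qD at *; omega
    rw [subN_eq_of_lt hqp (by omega)]
    unfold qD at *; omega

lemma av_pD_qD {N d : ℕ} (hN : 0 < N) (hd : d < N) : av N (pD N d) (qD d) = 0 := by
  unfold av addN
  rw [subN_qD_pD hN hd]
  rcases pD_spec hN hd with ⟨h2, hp⟩ | ⟨h2, hp⟩
  · rw [hp, h2]; simp
  · rw [hp]
    have : N - d / 2 + d / 2 = N := by omega
    rw [this, Nat.mod_self]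

lemma av_self {N c : ℕ} (hc : c < N) : av N c c = c := by
  unfold av addN subN
  have h1 : c + N - c = 0 + N := by omega
  rw [h1, Nat.add_mod_right]
  simp [Nat.mod_eq_of_lt hc]

lemma av_zero_iff {N a b : ℕ} (hN : 0 < N) (ha : a < N) (hb : b < N) :
    av N a b = 0 ↔ a = pD N (subN N b a) ∧ b = qD (subN N b a) := by
  constructor
  · intro h
    set d := subN N b a with hdd
    have hd : d < N := subN_lt hN b a
    have hav : (a + d / 2) % N = 0 := h
    have h2 : a + d / 2 < 2 * N := by
      have := Nat.div_le_self d 2; omega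
    have h0N : a + d / 2 = 0 ∨ a + d / 2 = N := by
      rcases Nat.lt_or_ge (a + d / 2) N with hlt | hge
      · left; rwa [Nat.mod_eq_of_lt hlt] at hav
      · right
        have : a + d / 2 - N < N := by omega
        have h3 : (a + d / 2 - N) % N = 0 := by
          have h4 : a + d / 2 = (a + d / 2 - N) + N := by omega
          rw [h4, Nat.add_mod_right] at hav; exact hav
        rw [Nat.mod_eq_of_lt this] at h3; omega
    -- determine d's relation to a b
    rcases le_or_gt a b with hab | hba
    · have hd' : d = b - a := by rw [hdd, subN_eq_of_le hab hb]
      -- then b = a + d; a + d/2 = N impossible since then b ≥ N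
      rcases h0N with h0 | h0
      · have ha0 : a = 0 := by omega
        have : d / 2 = 0 := by omega
        constructor
        · rcases pD_spec hN hd with ⟨_, hp⟩ | ⟨hq, _⟩ <;> omega
        · unfold qD; omega
      · exfalso
        have : b = a + d := by omega
        have : d / 2 ≤ d := Nat.div_le_self d 2
        omega
    · have hd' : d = b + N - a := by rw [hdd, subN_eq_of_lt hba ha]
      rcases h0N with h0 | h0
      · omega
      · have hdhalf : 0 < d / 2 := by
          -- if d/2 = 0 then a = N, contra
          by_contra hcon
          have : d / 2 = 0 := by omega
          omega
        constructor
        · rcases pD_spec hN hd with ⟨hq, _⟩ | ⟨_, hp⟩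
          · omega
          · omega
        · unfold qD
          have : d / 2 + (d + 1) / 2 = d := by omega
          omega
  · rintro ⟨hpa, hqb⟩
    have hd : subN N b a < N := subN_lt hN b a
    have h := av_pD_qD hN hd
    rwa [← hpa, ← hqb] at h

end RhythmAux
namespace RhythmAux
open Rhythm

/-! ### csucc / cpred -/

lemma csucc_val {n : ℕ} (k : Fin n) (h : k.val + 1 < n) :
    csucc k = ⟨k.val + 1, h⟩ := by
  unfold csucc
  exact Fin.ext (Nat.mod_eq_of_lt h)

lemma csucc_last {n : ℕ} (h : 0 < n) :
    csucc (⟨n - 1, by omega⟩ : Fin n) = ⟨0, h⟩ := by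
  unfold csucc
  apply Fin.ext
  simp only
  have : n - 1 + 1 = n := by omega
  rw [this, Nat.mod_self]

lemma cpred_csucc {n : ℕ} (k : Fin n) : cpred (csucc k) = k := by
  unfold cpred csucc
  apply Fin.ext
  simp only
  rw [Nat.mod_add_mod]
  have h1 : k.val + 1 + (n - 1) = k.val + n := by have := k.pos; omega
  rw [h1, Nat.add_mod_right, Nat.mod_eq_of_lt k.isLt]

/-! ### BtoI facts -/

section BtoI
variable {N : ℕ} (v : Fin N → ZMod 2)

lemma mem_supp_iff {i : Fin N} : i ∈ supp N v ↔ v i = 1 := by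
  simp [supp]

lemma btoI_lt (i : Fin (supp N v).card) : BtoI N v i < N :=
  (((supp N v).orderIsoOfFin rfl) i).1.isLt

lemma btoI_strictMono : StrictMono (BtoI N v) := by
  intro i j hij
  have h := ((supp N v).orderIsoOfFin rfl).strictMono hij
  exact h

lemma btoI_mono : Monotone (BtoI N v) := (btoI_strictMono v).monotone

lemma exists_btoI {x : Fin N} (hx : x ∈ supp N v) :
    ∃ i, BtoI N v i = x.val := by
  obtain ⟨i, hi⟩ := ((supp N v).orderIsoOfFin rfl).surjective ⟨x, hx⟩
  exact ⟨i, by rw [BtoI, hi]⟩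

lemma btoI_mem (i : Fin (supp N v).card) :
    (⟨BtoI N v i, btoI_lt v i⟩ : Fin N) ∈ supp N v := by
  have h := (((supp N v).orderIsoOfFin rfl) i).2
  simpa [BtoI] using h

lemma v_btoI (i : Fin (supp N v).card) :
    v ⟨BtoI N v i, btoI_lt v i⟩ = 1 := (mem_supp_iff v).mp (btoI_mem v i)

/-- nothing in the support strictly between consecutive values -/
lemma no_middle {k : Fin (supp N v).card} (hk : k.val + 1 < (supp N v).card)
    {j : Fin N} (hj : j ∈ supp N v) :
    ¬(BtoI N v k < j.val ∧ j.val < BtoI N v ⟨k.val + 1, hk⟩) := by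
  rintro ⟨h1, h2⟩
  obtain ⟨i, hi⟩ := exists_btoI v hj
  rw [← hi] at h1 h2
  have hki : k < i := by
    by_contra hcon
    have : i ≤ k := not_lt.mp hcon
    exact absurd h1 (not_lt.mpr (btoI_mono v this))
  have : (⟨k.val + 1, hk⟩ : Fin (supp N v).card) ≤ i := by
    rw [Fin.le_def]; simp; omega
  exact absurd h2 (not_lt.mpr (btoI_mono v this))

lemma btoI_min (h : 0 < (supp N v).card) (i : Fin (supp N v).card) :
    BtoI N v ⟨0, h⟩ ≤ BtoI N v i := btoI_mono v (by simp [Fin.le_def])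

lemma btoI_max (h : 0 < (supp N v).card) (i : Fin (supp N v).card) :
    BtoI N v i ≤ BtoI N v ⟨(supp N v).card - 1, by omega⟩ :=
  btoI_mono v (by rw [Fin.le_def]; simp; omega)

/-- every realized consecutive pair is either an increasing pair with nothing
in between, or the wrap-around pair (max, min) -/
lemma pair_cases (k : Fin (supp N v).card) :
    (k.val + 1 < (supp N v).card ∧ BtoI N v k < BtoI N v (csucc k) ∧
      ∀ j ∈ supp N v, ¬(BtoI N v k < j.val ∧ j.val < BtoI N v (csucc k))) ∨
    ((∀ j ∈ supp N v, j.val ≤ BtoI N v k) ∧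
      (∀ j ∈ supp N v, BtoI N v (csucc k) ≤ j.val) ∧
      BtoI N v (csucc k) ≤ BtoI N v k) := by
  by_cases hk : k.val + 1 < (supp N v).card
  · left
    refine ⟨hk, ?_, ?_⟩
    · rw [csucc_val k hk]
      exact btoI_strictMono v (by rw [Fin.lt_def]; simp)
    · intro j hj
      rw [csucc_val k hk]
      exact no_middle v hk hj
  · right
    have hpos : 0 < (supp N v).card := k.pos
    have hklast : k = ⟨(supp N v).card - 1, by omega⟩ :=
      Fin.ext (by have := k.isLt; simp; omega)
    rw [hklast, csucc_last hpos]
    refine ⟨?_, ?_, ?_⟩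
    · intro j hj
      obtain ⟨i, hi⟩ := exists_btoI v hj
      rw [← hi]
      exact btoI_max v hpos i
    · intro j hj
      obtain ⟨i, hi⟩ := exists_btoI v hj
      rw [← hi]
      exact btoI_min v hpos i
    · exact btoI_min v hpos _

/-- successor realization for an increasing pair -/
lemma succ_exists {x y : Fin N} (hx : x ∈ supp N v) (hy : y ∈ supp N v)
    (hlt : x.val < y.val)
    (hmid : ∀ j ∈ supp N v, ¬(x.val < j.val ∧ j.val < y.val)) :
    ∃ k, BtoI N v k = x.val ∧ BtoI N v (csucc k) = y.val := by
  obtain ⟨i, hi⟩ := exists_btoI v hx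
  obtain ⟨j, hj⟩ := exists_btoI v hy
  have hij : i < j := by
    by_contra hcon
    have : j ≤ i := not_lt.mp hcon
    have := btoI_mono v this
    omega
  have hi1 : i.val + 1 < (supp N v).card := by
    have := j.isLt
    have : i.val + 1 ≤ j.val := hij
    omega
  refine ⟨i, hi, ?_⟩
  rw [csucc_val i hi1]
  have h1 : BtoI N v i < BtoI N v ⟨i.val + 1, hi1⟩ :=
    btoI_strictMono v (by rw [Fin.lt_def]; simp)
  have h2 : BtoI N v ⟨i.val + 1, hi1⟩ ≤ BtoI N v j :=
    btoI_mono v (by rw [Fin.le_def]; simp; omega)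
  rcases Nat.lt_or_ge (BtoI N v ⟨i.val + 1, hi1⟩) (BtoI N v j) with hlt2 | hge2
  · exfalso
    exact hmid ⟨BtoI N v ⟨i.val + 1, hi1⟩, btoI_lt v _⟩ (btoI_mem v _) (by simp; omega)
  · omega

/-- wrap-around realization -/
lemma wrap_exists {x y : Fin N} (hx : x ∈ supp N v) (hy : y ∈ supp N v)
    (htop : ∀ j ∈ supp N v, j.val ≤ x.val)
    (hbot : ∀ j ∈ supp N v, y.val ≤ j.val) :
    ∃ k, BtoI N v k = x.val ∧ BtoI N v (csucc k) = y.val := by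
  have hpos : 0 < (supp N v).card := Finset.card_pos.mpr ⟨x, hx⟩
  refine ⟨⟨(supp N v).card - 1, by omega⟩, ?_, ?_⟩
  · obtain ⟨i, hi⟩ := exists_btoI v hx
    have h1 : BtoI N v i ≤ BtoI N v ⟨(supp N v).card - 1, by omega⟩ := btoI_max v hpos i
    have h2 := htop ⟨_, btoI_lt v ⟨(supp N v).card - 1, by omega⟩⟩
      (btoI_mem v ⟨(supp N v).card - 1, by omega⟩)
    simp at h2
    omega
  · rw [csucc_last hpos]
    obtain ⟨j, hj⟩ := exists_btoI v hy
    have h1 : BtoI N v ⟨0, hpos⟩ ≤ BtoI N v j := btoI_min v hpos j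
    have h2 := hbot ⟨_, btoI_lt v ⟨0, hpos⟩⟩ (btoI_mem v ⟨0, hpos⟩)
    simp at h2
    omega

end BtoI

end RhythmAux
namespace RhythmAux
open Rhythm

/-! ### range of Iav vs Rav -/

lemma exists_iav_iff {N n : ℕ} (a : Fin n → ℕ) (ha : ∀ i, a i < N) (x : ℕ) :
    (∃ k, Iav N a k = x) ↔ ∃ k, Rav N a k = x := by
  unfold Iav
  by_cases h2 : 2 ≤ n
  · rw [dif_pos h2]
    by_cases hpr : N - a ⟨n - 1, by omega⟩ > a ⟨0, by omega⟩
    · rw [if_pos hpr]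
    · rw [if_neg hpr]
      constructor
      · rintro ⟨k, hk⟩; exact ⟨cpred k, hk⟩
      · rintro ⟨k, hk⟩
        exact ⟨csucc k, by rw [rot, cpred_csucc]; exact hk⟩
  · rw [dif_neg h2]
    have hn01 : n = 0 ∨ n = 1 := by omega
    rcases hn01 with hn | hn
    · subst hn
      exact ⟨fun ⟨k, _⟩ => k.elim0, fun ⟨k, _⟩ => k.elim0⟩
    · subst hn
      have hrav : ∀ k : Fin 1, Rav N a k = a k := by
        intro k
        have hc : csucc k = k := Subsingleton.elim _ _
        rw [Rav, hc, av_self (ha k)]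
      constructor
      · rintro ⟨k, hk⟩; exact ⟨k, by rw [hrav]; exact hk⟩
      · rintro ⟨k, hk⟩; rw [hrav] at hk; exact ⟨k, hk⟩

/-! ### the event `Ed` -/

/-- `j` lies strictly inside the forward arc from `pD N d` of length `d`
(for `d = 0`, the arc is everything except `pD N 0 = 0`). -/
def inArc (N d j : ℕ) : Prop :=
  ∃ e, 1 ≤ e ∧ e < (if d = 0 then N else d) ∧ j = (pD N d + e) % N

/-- the event that the parental pair of gap `d` consists of two cyclically
consecutive support elements -/
def Ed (N : ℕ) (v : Fin N → ZMod 2) (d : ℕ) : Prop :=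
  ∃ P Q : Fin N, P.val = pD N d ∧ Q.val = qD d ∧ v P = 1 ∧ v Q = 1 ∧
    ∀ j : Fin N, inArc N d j.val → v j = 0

lemma v_ne_zero {N : ℕ} {v : Fin N → ZMod 2} {j : Fin N} (h : ¬ v j = 0) : v j = 1 := by
  rcases z2 (v j) with h0 | h1
  · exact absurd h0 h
  · exact h1

theorem bav_zero_iff {N : ℕ} (hN : 0 < N) (v : Fin N → ZMod 2) :
    Bav N v ⟨0, hN⟩ = 1 ↔ ∃ d, d < N ∧ Ed N v d := by
  have step1 : Bav N v ⟨0, hN⟩ = 1 ↔ ∃ k, Iav N (BtoI N v) k = 0 := by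
    unfold Bav ItoB
    constructor
    · intro h
      by_contra hcon
      rw [if_neg (by simpa using hcon)] at h
      exact absurd h (by decide)
    · intro h
      rw [if_pos (by simpa using h)]
  rw [step1, exists_iav_iff _ (fun i => btoI_lt v i)]
  constructor
  · rintro ⟨k, hk⟩
    have hxN : BtoI N v k < N := btoI_lt v k
    have hyN : BtoI N v (csucc k) < N := btoI_lt v (csucc k)
    have hav : av N (BtoI N v k) (BtoI N v (csucc k)) = 0 := hk
    obtain ⟨hpx, hqy⟩ := (av_zero_iff hN hxN hyN).mp hav
    have hdN : subN N (BtoI N v (csucc k)) (BtoI N v k) < N := subN_lt hN _ _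
    refine ⟨subN N (BtoI N v (csucc k)) (BtoI N v k), hdN,
      ⟨_, hxN⟩, ⟨_, hyN⟩, by simpa using hpx, by simpa using hqy,
      v_btoI v k, v_btoI v (csucc k), ?_⟩
    intro j hj
    obtain ⟨e, he1, he2, hje⟩ := hj
    rw [← hpx] at hje
    rcases pair_cases v k with ⟨hk1, hlt, hmid⟩ | ⟨htop, hbot, hle⟩
    · -- increasing pair, d = y - x ≥ 1
      have hdval : subN N (BtoI N v (csucc k)) (BtoI N v k)
          = BtoI N v (csucc k) - BtoI N v k := subN_eq_of_le (le_of_lt hlt) hyN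
      rw [hdval] at he2
      rw [if_neg (by omega)] at he2
      have hje' : j.val = BtoI N v k + e := by
        rw [hje, Nat.mod_eq_of_lt (by omega)]
      by_contra hvj
      exact hmid j ((mem_supp_iff v).mpr (v_ne_zero hvj)) (by omega)
    · rcases Nat.eq_or_lt_of_le hle with heq | hlt
      · -- x = y, singleton support, x = 0
        rw [heq] at hav
        have hx0 : BtoI N v k = 0 := by rw [← av_self hxN]; exact hav
        have hd0 : subN N (BtoI N v (csucc k)) (BtoI N v k) = 0 := by
          rw [heq, hx0]
          rw [subN_eq_of_le le_rfl hN]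
        rw [if_pos hd0] at he2
        have hje' : j.val = e := by
          rw [hje, hx0, Nat.zero_add, Nat.mod_eq_of_lt (by omega)]
        by_contra hvj
        have := htop j ((mem_supp_iff v).mpr (v_ne_zero hvj))
        omega
      · -- y < x
        have hdval : subN N (BtoI N v (csucc k)) (BtoI N v k)
            = BtoI N v (csucc k) + N - BtoI N v k := subN_eq_of_lt hlt hxN
        rw [hdval] at he2
        rw [if_neg (by omega)] at he2
        by_contra hvj
        have hjs := (mem_supp_iff v).mpr (v_ne_zero hvj)
        rcases Nat.lt_or_ge (BtoI N v k + e) N with hc | hc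
        · have hje' : j.val = BtoI N v k + e := by rw [hje, Nat.mod_eq_of_lt hc]
          have := htop j hjs
          omega
        · have hje' : j.val = BtoI N v k + e - N := by
            have h4 : BtoI N v k + e = (BtoI N v k + e - N) + N := by omega
            rw [hje, h4, Nat.add_mod_right, Nat.mod_eq_of_lt (by omega)]
            omega
          have := hbot j hjs
          omega
  · rintro ⟨d, hdN, P, Q, hP, hQ, hvP, hvQ, harc⟩
    have hPs : P ∈ supp N v := (mem_supp_iff v).mpr hvP
    have hQs : Q ∈ supp N v := (mem_supp_iff v).mpr hvQ
    have hgoal : ∀ k, BtoI N v k = P.val → BtoI N v (csucc k) = Q.val →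
        ∃ k, Rav N (BtoI N v) k = 0 := by
      intro k h1 h2
      refine ⟨k, ?_⟩
      show av N (BtoI N v k) (BtoI N v (csucc k)) = 0
      rw [h1, h2, hP, hQ]
      exact av_pD_qD hN hdN
    by_cases hd0 : d = 0
    · -- P = Q = 0, singleton support
      subst hd0
      have hP0 : P.val = 0 := by
        rw [hP]; rcases pD_spec hN hdN with ⟨_, hp⟩ | ⟨h2, _⟩
        · exact hp
        · omega
      have hQ0 : Q.val = 0 := by rw [hQ]; rfl
      have hppd : pD N 0 = 0 := by
        rcases pD_spec hN hdN with ⟨_, hp⟩ | ⟨h2, _⟩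
        · exact hp
        · omega
      obtain ⟨k, hk1, hk2⟩ := wrap_exists v hPs hQs
        (fun j hjs => by
          rw [hP0]
          by_contra hcon
          have hj1 : 1 ≤ j.val := by omega
          have := harc j ⟨j.val, hj1, by rw [if_pos rfl]; exact j.isLt, by
            rw [hppd, Nat.zero_add, Nat.mod_eq_of_lt j.isLt]⟩
          rw [(mem_supp_iff v).mp hjs] at this
          exact absurd this (by decide))
        (fun j hjs => by omega)
      exact hgoal k hk1 hk2
    · have hd1 : 1 ≤ d := by omega
      have hsub := subN_qD_pD hN hdN
      rcases Nat.lt_or_ge (pD N d) (qD d) with hpq | hqp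
      · -- increasing pair: d = qD - pD
        have hs2 := subN_eq_of_le (le_of_lt hpq) (qD_lt hdN)
        have hdval : d = qD d - pD N d := by omega
        obtain ⟨k, hk1, hk2⟩ := succ_exists v hPs hQs (by omega)
          (fun j hjs => by
            rintro ⟨h1, h2⟩
            rw [hP] at h1; rw [hQ] at h2
            have := harc j ⟨j.val - pD N d, by omega, by rw [if_neg hd0]; omega,
              by rw [Nat.mod_eq_of_lt (by have := qD_lt hdN; omega)]; omega⟩
            rw [(mem_supp_iff v).mp hjs] at this
            exact absurd this (by decide))
        exact hgoal k hk1 hk2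
      · -- wrap pair: qD < pD and d = qD + N - pD
        have hqp' : qD d < pD N d := by
          rcases Nat.eq_or_lt_of_le hqp with heq | h
          · exfalso
            rw [← heq] at hsub
            have := subN_eq_of_le (le_refl (qD d)) (qD_lt hdN)
            omega
          · exact h
        have hs2 := subN_eq_of_lt hqp' (pD_lt hN d)
        have hdval : d = qD d + N - pD N d := by omega
        obtain ⟨k, hk1, hk2⟩ := wrap_exists v hPs hQs
          (fun j hjs => by
            rw [hP]
            by_contra hcon
            have := harc j ⟨j.val - pD N d, by omega, by rw [if_neg hd0]; omega,
              by rw [Nat.mod_eq_of_lt (by have := j.isLt; omega)]; omega⟩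
            rw [(mem_supp_iff v).mp hjs] at this
            exact absurd this (by decide))
          (fun j hjs => by
            rw [hQ]
            by_contra hcon
            have := harc j ⟨j.val + N - pD N d, by have := pD_lt hN d; omega,
              by rw [if_neg hd0]; omega,
              by
                have h4 : pD N d + (j.val + N - pD N d) = j.val + N := by
                  have := pD_lt hN d; omega
                rw [h4, Nat.add_mod_right, Nat.mod_eq_of_lt j.isLt]⟩
            rw [(mem_supp_iff v).mp hjs] at this
            exact absurd this (by decide))
        exact hgoal k hk1 hk2

end RhythmAux
namespace RhythmAux
open Rhythm

lemma pD_zero {N : ℕ} (hN : 0 < N) : pD N 0 = 0 := by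
  unfold pD
  simp [Nat.mod_self]

lemma Ed_lt_aux {N : ℕ} (hN : 0 < N) (v : Fin N → ZMod 2) {d d' : ℕ}
    (hdd : d < d') (hd' : d' < N) (h : Ed N v d) (h' : Ed N v d') : False := by
  obtain ⟨P, Q, hP, hQ, hvP, hvQ, harc⟩ := h
  obtain ⟨P', Q', hP', hQ', hvP', hvQ', harc'⟩ := h'
  have hdN : d < N := by omega
  by_cases hd0 : d = 0
  · -- arc of 0 is everything nonzero; Q' is nonzero
    subst hd0
    have hq1 : 1 ≤ Q'.val := by rw [hQ']; unfold qD; omega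
    have := harc Q' ⟨Q'.val, hq1, by rw [if_pos rfl]; exact Q'.isLt,
      by rw [pD_zero hN, Nat.zero_add, Nat.mod_eq_of_lt Q'.isLt]⟩
    rw [hvQ'] at this
    exact absurd this (by decide)
  · have hd1 : 1 ≤ d := by omega
    have hd'0 : d' ≠ 0 := by omega
    rcases Nat.lt_or_ge (d / 2) (d' / 2) with hss | hss
    · -- P lies inside the arc of d'
      have hs'1 : 1 ≤ d' / 2 := by omega
      have hp' : pD N d' = N - d' / 2 := by
        rcases pD_spec hN hd' with ⟨h2, _⟩ | ⟨_, hp⟩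
        · omega
        · exact hp
      have hval : P.val = (pD N d' + (d' / 2 - d / 2)) % N := by
        rw [hP, hp']
        have h4 : N - d' / 2 + (d' / 2 - d / 2) = N - d / 2 := by omega
        rw [h4]
        rfl
      have := harc' P ⟨d' / 2 - d / 2, by omega,
        by rw [if_neg hd'0]; omega, hval⟩
      rw [hvP] at this
      exact absurd this (by decide)
    · -- d/2 = d'/2, so qD d < qD d'; Q lies inside the arc of d'
      have hss' : d / 2 = d' / 2 := by omega
      have htt : qD d < qD d' := by unfold qD; omega
      have hq1 : 1 ≤ qD d := by unfold qD; omega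
      have heq : d' / 2 + qD d' = d' := by unfold qD; omega
      have hval : Q.val = (pD N d' + (d' / 2 + qD d)) % N := by
        rw [hQ]
        rcases pD_spec hN hd' with ⟨h2, hp⟩ | ⟨h2, hp⟩
        · rw [hp, h2, Nat.zero_add, Nat.zero_add,
            Nat.mod_eq_of_lt (by have := qD_lt hdN; omega)]
        · rw [hp]
          have h4 : N - d' / 2 + (d' / 2 + qD d) = qD d + N := by omega
          rw [h4, Nat.add_mod_right, Nat.mod_eq_of_lt (qD_lt hdN)]
      have := harc' Q ⟨d' / 2 + qD d, by omega,
        by rw [if_neg hd'0]; omega, hval⟩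
      rw [hvQ] at this
      exact absurd this (by decide)

lemma Ed_unique {N : ℕ} (hN : 0 < N) (v : Fin N → ZMod 2) {d d' : ℕ}
    (hd : d < N) (hd' : d' < N) (h : Ed N v d) (h' : Ed N v d') : d = d' := by
  rcases Nat.lt_trichotomy d d' with hlt | heq | hgt
  · exact absurd (Ed_lt_aux hN v hlt hd' h h') (by simp)
  · exact heq
  · exact absurd (Ed_lt_aux hN v hgt hd h' h) (by simp)

end RhythmAux
namespace RhythmAux
open Rhythm

def lo (N : ℕ) : ℤ := -(((N - 1) / 2 : ℕ) : ℤ)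
def hi (N : ℕ) : ℤ := ((N / 2 : ℕ) : ℤ)

lemma toSigned_mem {N : ℕ} (i : Fin N) :
    lo N ≤ toSigned N i ∧ toSigned N i ≤ hi N := by
  have hiN := i.isLt
  unfold toSigned lo hi
  split <;> constructor <;> push_cast <;> omega

lemma toSigned_dvd {N : ℕ} (i : Fin N) :
    (N : ℤ) ∣ ((i.val : ℤ) - toSigned N i) := by
  unfold toSigned
  split
  · simp
  · refine ⟨1, by ring⟩

lemma interval_cong_eq {N : ℕ} (hN : 0 < N) {x t : ℤ}
    (hx1 : lo N ≤ x) (hx2 : x ≤ hi N) (ht1 : lo N ≤ t) (ht2 : t ≤ hi N)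
    (h : (N : ℤ) ∣ x - t) : x = t := by
  have h0 : x - t = 0 := by
    apply Int.eq_zero_of_abs_lt_dvd h
    unfold lo hi at *
    rw [abs_lt]
    constructor <;> push_cast at * <;> omega
  omega

lemma toSigned_eq {N : ℕ} (hN : 0 < N) (i : Fin N) {t : ℤ}
    (h1 : lo N ≤ t) (h2 : t ≤ hi N) (h3 : (N : ℤ) ∣ ((i.val : ℤ) - t)) :
    toSigned N i = t := by
  obtain ⟨hm1, hm2⟩ := toSigned_mem i
  refine interval_cong_eq hN hm1 hm2 h1 h2 ?_
  have := toSigned_dvd i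
  have h4 : toSigned N i - t = ((i.val : ℤ) - t) - ((i.val : ℤ) - toSigned N i) := by ring
  rw [h4]
  exact dvd_sub h3 this

lemma exists_fin_toSigned {N : ℕ} (hN : 0 < N) {t : ℤ}
    (h1 : lo N ≤ t) (h2 : t ≤ hi N) : ∃ j : Fin N, toSigned N j = t := by
  rcases le_or_gt 0 t with h0 | h0
  · refine ⟨⟨t.toNat, ?_⟩, ?_⟩
    · unfold hi at h2; omega
    · exact toSigned_eq hN _ h1 h2 ⟨0, by simp; omega⟩
  · refine ⟨⟨(t + N).toNat, ?_⟩, ?_⟩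
    · unfold lo at h1; omega
    · refine toSigned_eq hN _ h1 h2 ⟨1, ?_⟩
      have : ((t + N).toNat : ℤ) = t + N := by unfold lo at h1; omega
      rw [this]; ring

lemma natmod_cong {a b N : ℕ} (ha : a < N) (hb : b < N)
    (h : (N : ℤ) ∣ (a : ℤ) - b) : a = b := by
  have h0 : (a : ℤ) - b = 0 := by
    apply Int.eq_zero_of_abs_lt_dvd h
    rw [abs_lt]; constructor <;> push_cast <;> omega
  omega

lemma pD_int {N d : ℕ} (hN : 0 < N) (hd : d < N) :
    ∃ c : ℤ, (c = 0 ∨ c = 1) ∧ (pD N d : ℤ) = -((d / 2 : ℕ) : ℤ) + c * N := by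
  rcases pD_spec hN hd with ⟨h2, hp⟩ | ⟨h2, hp⟩
  · exact ⟨0, Or.inl rfl, by rw [hp, h2]; simp⟩
  · refine ⟨1, Or.inr rfl, ?_⟩
    rw [hp]
    have hle : d / 2 ≤ N := by omega
    push_cast [Nat.cast_sub hle]
    ring

lemma modN_int (a N : ℕ) : ∃ q : ℤ, ((a % N : ℕ) : ℤ) = (a : ℤ) - q * N := by
  refine ⟨((a / N : ℕ) : ℤ), ?_⟩
  have h := Nat.mod_add_div a N
  have h' : ((a % N : ℕ) : ℤ) + (N : ℤ) * ((a / N : ℕ) : ℤ) = (a : ℤ) := by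
    exact_mod_cast h
  linarith

/-- the signed coordinates of the parental pair of gap `d` -/
lemma toSigned_pD {N d : ℕ} (hN : 0 < N) (hd : d < N) :
    toSigned N ⟨pD N d, pD_lt hN d⟩ = -((d / 2 : ℕ) : ℤ) := by
  obtain ⟨c, hc01, hc⟩ := pD_int hN hd
  refine toSigned_eq hN _ ?_ ?_ ⟨c, ?_⟩
  · unfold lo; push_cast; omega
  · unfold hi; push_cast; omega
  · rw [Fin.val_mk, hc]; ring

lemma toSigned_qD {N d : ℕ} (hN : 0 < N) (hd : d < N) :
    toSigned N ⟨qD d, qD_lt hd⟩ = (((d + 1) / 2 : ℕ) : ℤ) := by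
  refine toSigned_eq hN _ ?_ ?_ ⟨0, ?_⟩
  · unfold lo; push_cast; omega
  · unfold hi; push_cast; omega
  · rw [Fin.val_mk]; unfold qD; simp

lemma toSigned_zero_iff {N : ℕ} (hN : 0 < N) (j : Fin N) :
    toSigned N j = 0 ↔ j.val = 0 := by
  constructor
  · intro h
    have := toSigned_dvd j
    rw [h, sub_zero] at this
    have := natmod_cong j.isLt hN (by simpa using this)
    omega
  · intro h
    exact toSigned_eq hN _ (by unfold lo; omega) (by unfold hi; positivity)
      ⟨0, by rw [h]; simp⟩

/-- arc membership in signed coordinates, `d ≥ 1` -/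
lemma inArc_iff_signed {N d : ℕ} (hN : 0 < N) (hd : d < N) (hd1 : 1 ≤ d) (j : Fin N) :
    inArc N d j.val ↔
      (-((d / 2 : ℕ) : ℤ) < toSigned N j ∧ toSigned N j < (((d + 1) / 2 : ℕ) : ℤ)) := by
  obtain ⟨c, hc01, hc⟩ := pD_int hN hd
  constructor
  · rintro ⟨e, he1, he2, hje⟩
    rw [if_neg (by omega)] at he2
    obtain ⟨q, hq⟩ := modN_int (pD N d + e) N
    have hσ : toSigned N j = -((d / 2 : ℕ) : ℤ) + e := by
      refine toSigned_eq hN _ ?_ ?_ ?_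
      · unfold lo; push_cast; omega
      · unfold hi; push_cast; omega
      · refine ⟨c - q, ?_⟩
        have hjq : (j.val : ℤ) = ((pD N d + e : ℕ) : ℤ) - q * N := by
          rw [hje]; exact_mod_cast hq
        push_cast at hjq
        rw [hjq, hc]
        ring
    rw [hσ]
    constructor <;> push_cast <;> omega
  · rintro ⟨h1, h2⟩
    have he0 : 0 ≤ toSigned N j + ((d / 2 : ℕ) : ℤ) := by omega
    set e : ℕ := (toSigned N j + ((d / 2 : ℕ) : ℤ)).toNat with he
    have heInt : (e : ℤ) = toSigned N j + ((d / 2 : ℕ) : ℤ) := Int.toNat_of_nonneg he0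
    refine ⟨e, ?_, ?_, ?_⟩
    · -- 1 ≤ e
      omega
    · rw [if_neg (by omega)]
      push_cast at heInt ⊢
      omega
    · obtain ⟨q, hq⟩ := modN_int (pD N d + e) N
      obtain ⟨w, hw⟩ := toSigned_dvd j
      apply natmod_cong j.isLt (Nat.mod_lt _ hN)
      refine ⟨w - c + q, ?_⟩
      have hq' : (((pD N d + e) % N : ℕ) : ℤ) = (pD N d : ℤ) + e - q * N := by
        rw [hq]; push_cast; ring
      rw [hq', hc, heInt]
      linear_combination hw

/-- arc membership for `d = 0` -/
lemma inArc_zero_iff {N : ℕ} (hN : 0 < N) (j : Fin N) :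
    inArc N 0 j.val ↔ j.val ≠ 0 := by
  constructor
  · rintro ⟨e, he1, he2, hje⟩
    rw [if_pos rfl] at he2
    rw [hje, pD_zero hN, Nat.zero_add, Nat.mod_eq_of_lt he2]
    omega
  · intro h
    refine ⟨j.val, by omega, by rw [if_pos rfl]; exact j.isLt, ?_⟩
    rw [pD_zero hN, Nat.zero_add, Nat.mod_eq_of_lt j.isLt]

end RhythmAux
namespace RhythmAux
open Rhythm

/-- the polynomial indicator of the event `Ed` -/
noncomputable def T (N : ℕ) (y : ℤ → ZMod 2) (d : ℕ) : ZMod 2 :=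
  if d = 0 then (1 + y 0) * ∏ k ∈ (Finset.Icc (lo N) (hi N)).erase 0, y k
  else (1 + y (-((d / 2 : ℕ) : ℤ))) * (1 + y (((d + 1) / 2 : ℕ) : ℤ)) *
    ∏ k ∈ Finset.Ioo (-((d / 2 : ℕ) : ℤ)) (((d + 1) / 2 : ℕ) : ℤ), y k

theorem T_eq_one_iff {N d : ℕ} (hN : 0 < N) (hd : d < N) (y : ℤ → ZMod 2) :
    T N y d = 1 ↔ Ed N (fun i => 1 + y (toSigned N i)) d := by
  set v : Fin N → ZMod 2 := fun i => 1 + y (toSigned N i) with hv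
  have hv1 : ∀ i : Fin N, (v i = 1 ↔ y (toSigned N i) = 0) := fun i => z2_add_one_eq_one
  have hv0 : ∀ i : Fin N, (v i = 0 ↔ y (toSigned N i) = 1) := fun i => z2_add_one_eq_zero
  by_cases hd0 : d = 0
  · subst hd0
    rw [T, if_pos rfl]
    rw [z2_mul_eq_one, z2_add_one_eq_one, z2_prod_eq_one]
    constructor
    · rintro ⟨hy0, hall⟩
      have hσ0 : toSigned N (⟨0, hN⟩ : Fin N) = 0 :=
        (toSigned_zero_iff hN _).mpr rfl
      refine ⟨⟨0, hN⟩, ⟨0, hN⟩, by simp [pD_zero hN], by simp [qD], ?_, ?_, ?_⟩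
      · rw [hv1, hσ0]; exact hy0
      · rw [hv1, hσ0]; exact hy0
      · intro j hj
        have hjne : j.val ≠ 0 := (inArc_zero_iff hN j).mp hj
        rw [hv0]
        apply hall
        rw [Finset.mem_erase]
        refine ⟨fun h => hjne ((toSigned_zero_iff hN j).mp h), ?_⟩
        rw [Finset.mem_Icc]
        exact toSigned_mem j
    · rintro ⟨P, Q, hP, hQ, hvP, hvQ, harc⟩
      have hσP : toSigned N P = 0 := by
        apply (toSigned_zero_iff hN P).mpr
        rw [hP, pD_zero hN]
      constructor
      · rw [hv1, hσP] at hvP; exact hvP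
      · intro k hk
        rw [Finset.mem_erase, Finset.mem_Icc] at hk
        obtain ⟨hkne, hk1, hk2⟩ := hk
        obtain ⟨j, hj⟩ := exists_fin_toSigned hN hk1 hk2
        have hjne : j.val ≠ 0 := by
          intro h
          have : toSigned N j = 0 := (toSigned_zero_iff hN j).mpr h
          rw [hj] at this; exact hkne this
        have := harc j ((inArc_zero_iff hN j).mpr hjne)
        rw [hv0, hj] at this
        exact this
  · have hd1 : 1 ≤ d := by omega
    rw [T, if_neg hd0]
    rw [z2_mul_eq_one, z2_mul_eq_one, z2_add_one_eq_one, z2_add_one_eq_one,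
      z2_prod_eq_one]
    constructor
    · rintro ⟨⟨hyp, hyq⟩, hall⟩
      refine ⟨⟨pD N d, pD_lt hN d⟩, ⟨qD d, qD_lt hd⟩, rfl, rfl, ?_, ?_, ?_⟩
      · rw [hv1, toSigned_pD hN hd]; exact hyp
      · rw [hv1, toSigned_qD hN hd]; exact hyq
      · intro j hj
        obtain ⟨h1, h2⟩ := (inArc_iff_signed hN hd hd1 j).mp hj
        rw [hv0]
        exact hall _ (Finset.mem_Ioo.mpr ⟨h1, h2⟩)
    · rintro ⟨P, Q, hP, hQ, hvP, hvQ, harc⟩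
      have hPeq : P = (⟨pD N d, pD_lt hN d⟩ : Fin N) := Fin.ext hP
      have hQeq : Q = (⟨qD d, qD_lt hd⟩ : Fin N) := Fin.ext hQ
      subst hPeq; subst hQeq
      refine ⟨⟨?_, ?_⟩, ?_⟩
      · rw [hv1, toSigned_pD hN hd] at hvP; exact hvP
      · rw [hv1, toSigned_qD hN hd] at hvQ; exact hvQ
      · intro k hk
        rw [Finset.mem_Ioo] at hk
        have hk1 : lo N ≤ k := by
          have : lo N ≤ -((d / 2 : ℕ) : ℤ) := by unfold lo; push_cast; omega
          omega
        have hk2 : k ≤ hi N := by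
          have : (((d + 1) / 2 : ℕ) : ℤ) ≤ hi N := by unfold hi; push_cast; omega
          omega
        obtain ⟨j, hj⟩ := exists_fin_toSigned hN hk1 hk2
        have := harc j ((inArc_iff_signed hN hd hd1 j).mpr (by rw [hj]; exact hk))
        rw [hv0, hj] at this
        exact this

theorem G_eq_sum {N : ℕ} (hN : 0 < N) (y : ℤ → ZMod 2) :
    G N y = ∑ d ∈ Finset.range N, T N y d := by
  rw [G, dif_pos hN]
  set v : Fin N → ZMod 2 := fun i => 1 + y (toSigned N i) with hv
  have hbav : Bav N v ⟨0, hN⟩ = 0 ∨ Bav N v ⟨0, hN⟩ = 1 := z2 _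
  rcases hbav with h0 | h1
  · rw [h0]
    have hnone : ∀ d ∈ Finset.range N, T N y d = 0 := by
      intro d hd
      rw [Finset.mem_range] at hd
      rcases z2 (T N y d) with h | h
      · exact h
      · exfalso
        have hEd : Ed N v d := (T_eq_one_iff hN hd y).mp h
        have := (bav_zero_iff hN v).mpr ⟨d, hd, hEd⟩
        rw [h0] at this
        exact absurd this (by decide)
    rw [Finset.sum_eq_zero hnone]
  · rw [h1]
    obtain ⟨d, hd, hEd⟩ := (bav_zero_iff hN v).mp h1
    rw [Finset.sum_eq_single d]
    · exact ((T_eq_one_iff hN hd y).mpr hEd).symm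
    · intro b hb hbd
      rw [Finset.mem_range] at hb
      rcases z2 (T N y b) with h | h
      · exact h
      · exfalso
        exact hbd (Ed_unique hN v hb hd ((T_eq_one_iff hN hb y).mp h) hEd)
    · intro hdr
      exact absurd (Finset.mem_range.mpr hd) hdr

end RhythmAux
namespace RhythmAux
open Rhythm

lemma T_zero (N : ℕ) (y : ℤ → ZMod 2) :
    T N y 0 = (1 + y 0) * ∏ k ∈ (Finset.Icc (lo N) (hi N)).erase 0, y k := if_pos rfl

lemma T_pos (N : ℕ) (y : ℤ → ZMod 2) {d : ℕ} (hd : d ≠ 0) :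
    T N y d = (1 + y (-((d / 2 : ℕ) : ℤ))) * (1 + y (((d + 1) / 2 : ℕ) : ℤ)) *
      ∏ k ∈ Finset.Ioo (-((d / 2 : ℕ) : ℤ)) (((d + 1) / 2 : ℕ) : ℤ), y k := if_neg hd

lemma sum_split {N : ℕ} (hN : 0 < N) (f : ℕ → ZMod 2) :
    ∑ d ∈ Finset.range N, f d = f 0 + ∑ d ∈ Finset.Icc 1 (N - 1), f d := by
  rw [show Finset.range N = insert 0 (Finset.Icc 1 (N - 1)) from by
    ext k; simp [Finset.mem_range, Finset.mem_Icc]; omega]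
  rw [Finset.sum_insert (by simp)]

section prods
variable (y : ℤ → ZMod 2)

lemma prod_Icc_erase_split {a b : ℤ} (ha : a ≤ 0) (hb : 0 ≤ b) :
    ∏ k ∈ (Finset.Icc a b).erase 0, y k =
      (∏ k ∈ Finset.Icc a (-1), y k) * ∏ k ∈ Finset.Icc 1 b, y k := by
  rw [show (Finset.Icc a b).erase 0 = Finset.Icc a (-1) ∪ Finset.Icc 1 b from by
    ext k
    simp only [Finset.mem_erase, Finset.mem_Icc, Finset.mem_union]
    omega]
  refine Finset.prod_union ?_
  rw [Finset.disjoint_left]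
  intro k hk hk'
  simp only [Finset.mem_Icc] at hk hk'
  omega

lemma prod_Icc_split_zero {a b : ℤ} (ha : a ≤ 0) (hb : 0 ≤ b) :
    ∏ k ∈ Finset.Icc a b, y k =
      (∏ k ∈ Finset.Icc a (-1), y k) * y 0 * ∏ k ∈ Finset.Icc 1 b, y k := by
  have h0 : (0 : ℤ) ∈ Finset.Icc a b := by simp [Finset.mem_Icc]; omega
  rw [← Finset.mul_prod_erase _ _ h0, prod_Icc_erase_split y ha hb]
  ring

lemma prod_Icc_pop_bot {a b : ℤ} (a' : ℤ) (h : a ≤ b) (h' : a' = a + 1) :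
    ∏ k ∈ Finset.Icc a b, y k = y a * ∏ k ∈ Finset.Icc a' b, y k := by
  subst h'
  rw [show Finset.Icc a b = insert a (Finset.Icc (a + 1) b) from by
    ext k; simp only [Finset.mem_insert, Finset.mem_Icc]; omega]
  exact Finset.prod_insert (by simp)

lemma prod_Icc_pop_top {a b : ℤ} (b' : ℤ) (h : a ≤ b) (h' : b' = b - 1) :
    ∏ k ∈ Finset.Icc a b, y k = (∏ k ∈ Finset.Icc a b', y k) * y b := by
  subst h'
  rw [show Finset.Icc a b = insert b (Finset.Icc a (b - 1)) from by
    ext k; simp only [Finset.mem_insert, Finset.mem_Icc]; omega]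
  rw [Finset.prod_insert (by simp)]
  ring

end prods
end RhythmAux

open RhythmAux

open Rhythm in
/-- Recurrence for the 0-th rhythm polynomial in the variables indexed by `Z_{N,±}`.
Even case: `G_{2m}(y) = G_{2m−1}(y') + y_{−m+2}⋯y_{−1}·y_1⋯y_{m−1}·(y_m + 1)·(y_0 + y_{−m+1})`.
Odd case: `G_{2m+1}(y) = G_{2m}(y') + y_{−m+1}⋯y_{−1}·y_1⋯y_{m−1}·(y_{−m} + 1)·(y_0 + y_m)`.
Here `G_N` only reads `y` on `Z_{N,±}`, so using the same `y : ℤ → F_2` on both sides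
realizes the restriction `y'`. -/
theorem Bav_zero_recurrence (m : ℕ) (hm : 2 ≤ m) (y : ℤ → ZMod 2) :
    G (2 * m) y =
      G (2 * m - 1) y +
        (∏ k ∈ Finset.Icc (-(m : ℤ) + 2) (-1), y k) *
          (∏ k ∈ Finset.Icc (1 : ℤ) ((m : ℤ) - 1), y k) *
            (y (m : ℤ) + 1) * (y 0 + y (-(m : ℤ) + 1)) ∧
    G (2 * m + 1) y =
      G (2 * m) y +
        (∏ k ∈ Finset.Icc (-(m : ℤ) + 1) (-1), y k) *
          (∏ k ∈ Finset.Icc (1 : ℤ) ((m : ℤ) - 1), y k) *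
            (y (-(m : ℤ)) + 1) * (y 0 + y (m : ℤ)) := by
  have h2 : (2 : ZMod 2) = 0 := by decide
  constructor
  · -- even case
    have hN1 : (0:ℕ) < 2 * m := by omega
    have hN2 : (0:ℕ) < 2 * m - 1 := by omega
    rw [G_eq_sum hN1 y, G_eq_sum hN2 y, sum_split hN1, sum_split hN2]
    rw [show Finset.Icc 1 (2*m - 1) = insert (2*m - 1) (Finset.Icc 1 (2*m - 1 - 1)) from by
        ext k; simp only [Finset.mem_insert, Finset.mem_Icc]; omega,
      Finset.sum_insert (by simp only [Finset.mem_Icc]; omega)]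
    have hS : ∑ d ∈ Finset.Icc 1 (2*m - 1 - 1), T (2*m) y d
        = ∑ d ∈ Finset.Icc 1 (2*m - 1 - 1), T (2*m - 1) y d := by
      refine Finset.sum_congr rfl fun d hd => ?_
      simp only [Finset.mem_Icc] at hd
      rw [T_pos _ y (by omega), T_pos _ y (by omega)]
    rw [hS]
    rw [T_zero, T_zero, T_pos (2*m) y (show 2*m - 1 ≠ 0 by omega)]
    rw [show lo (2*m) = -(m:ℤ) + 1 from by unfold lo; omega,
      show hi (2*m) = (m:ℤ) from by unfold hi; omega,
      show lo (2*m - 1) = -(m:ℤ) + 1 from by unfold lo; omega,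
      show hi (2*m - 1) = (m:ℤ) - 1 from by unfold hi; omega,
      show (((2*m - 1) / 2 : ℕ) : ℤ) = (m:ℤ) - 1 from by omega,
      show (((2*m - 1 + 1) / 2 : ℕ) : ℤ) = (m:ℤ) from by omega,
      show -((m:ℤ) - 1) = -(m:ℤ) + 1 from by ring]
    rw [prod_Icc_erase_split y (show -(m:ℤ) + 1 ≤ 0 by omega) (show (0:ℤ) ≤ (m:ℤ) by omega),
      prod_Icc_erase_split y (show -(m:ℤ) + 1 ≤ 0 by omega)
        (show (0:ℤ) ≤ (m:ℤ) - 1 by omega)]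
    rw [prod_Icc_pop_bot y (-(m:ℤ) + 2) (show -(m:ℤ) + 1 ≤ -1 by omega) (by ring)]
    rw [prod_Icc_pop_top y ((m:ℤ) - 1) (show (1:ℤ) ≤ (m:ℤ) by omega) rfl]
    rw [show Finset.Ioo (-(m:ℤ) + 1) (m:ℤ) = Finset.Icc (-(m:ℤ) + 2) ((m:ℤ) - 1) from by
      ext k; simp only [Finset.mem_Ioo, Finset.mem_Icc]; omega]
    rw [prod_Icc_split_zero y (show -(m:ℤ) + 2 ≤ 0 by omega) (show (0:ℤ) ≤ (m:ℤ) - 1 by omega)]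
    linear_combination ((y 0 * y (-(m:ℤ) + 1) * y (m:ℤ) - y (-(m:ℤ) + 1)) *
      (∏ k ∈ Finset.Icc (-(m:ℤ) + 2) (-1), y k) *
      (∏ k ∈ Finset.Icc (1:ℤ) ((m:ℤ) - 1), y k)) * h2
  · -- odd case
    have hN1 : (0:ℕ) < 2 * m + 1 := by omega
    have hN2 : (0:ℕ) < 2 * m := by omega
    rw [G_eq_sum hN1 y, G_eq_sum hN2 y, sum_split hN1, sum_split hN2]
    rw [show Finset.Icc 1 (2*m + 1 - 1) = insert (2*m) (Finset.Icc 1 (2*m - 1)) from by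
        ext k; simp only [Finset.mem_insert, Finset.mem_Icc]; omega,
      Finset.sum_insert (by simp only [Finset.mem_Icc]; omega)]
    have hS : ∑ d ∈ Finset.Icc 1 (2*m - 1), T (2*m + 1) y d
        = ∑ d ∈ Finset.Icc 1 (2*m - 1), T (2*m) y d := by
      refine Finset.sum_congr rfl fun d hd => ?_
      simp only [Finset.mem_Icc] at hd
      rw [T_pos _ y (by omega), T_pos _ y (by omega)]
    rw [hS]
    rw [T_zero, T_zero, T_pos (2*m + 1) y (show 2*m ≠ 0 by omega)]
    rw [show lo (2*m + 1) = -(m:ℤ) from by unfold lo; omega,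
      show hi (2*m + 1) = (m:ℤ) from by unfold hi; omega,
      show lo (2*m) = -(m:ℤ) + 1 from by unfold lo; omega,
      show hi (2*m) = (m:ℤ) from by unfold hi; omega,
      show (((2*m) / 2 : ℕ) : ℤ) = (m:ℤ) from by omega,
      show (((2*m + 1) / 2 : ℕ) : ℤ) = (m:ℤ) from by omega]
    rw [prod_Icc_erase_split y (show -(m:ℤ) ≤ 0 by omega) (show (0:ℤ) ≤ (m:ℤ) by omega),
      prod_Icc_erase_split y (show -(m:ℤ) + 1 ≤ 0 by omega) (show (0:ℤ) ≤ (m:ℤ) by omega)]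
    rw [prod_Icc_pop_bot y (-(m:ℤ) + 1) (show -(m:ℤ) ≤ -1 by omega) (by ring)]
    rw [prod_Icc_pop_top y ((m:ℤ) - 1) (show (1:ℤ) ≤ (m:ℤ) by omega) rfl]
    rw [show Finset.Ioo (-(m:ℤ)) (m:ℤ) = Finset.Icc (-(m:ℤ) + 1) ((m:ℤ) - 1) from by
      ext k; simp only [Finset.mem_Ioo, Finset.mem_Icc]; omega]
    rw [prod_Icc_split_zero y (show -(m:ℤ) + 1 ≤ 0 by omega) (show (0:ℤ) ≤ (m:ℤ) - 1 by omega)]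
    linear_combination (y 0 * y (-(m:ℤ)) * y (m:ℤ) *
      (∏ k ∈ Finset.Icc (-(m:ℤ) + 1) (-1), y k) *
      (∏ k ∈ Finset.Icc (1:ℤ) ((m:ℤ) - 1), y k)
      - y (m:ℤ) * (∏ k ∈ Finset.Icc (-(m:ℤ) + 1) (-1), y k) *
      (∏ k ∈ Finset.Icc (1:ℤ) ((m:ℤ) - 1), y k)) * h2
end
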